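/- Fix reals α, β > −1 and integers n, k, m, j with 0 ≤ k ≤ n and 0 ≤ j ≤ m. Then ∬_{x>0, −x<y<x} P^{(α,β)}_{n,k}(x,y) · P^{(α,β)}_{m,j}(x,y) · x^{α−β} e^{−x} (x−y)^β dx dy equals s_{n,k}^{(α,β)} if n = m and k = j, and equals 0 otherwise, where s_{n,k}^{(α,β)} = 2^{β+1} Γ(α+n+k+2) / [(n−k)! (β+2k+1)]. -/

import Mathlib

open Finset MeasureTheory Real

/-- Pochhammer symbol `(a)_m = a (a+1) ⋯ (a+m-1)`. -/
noncomputable def poch (a : ℝ) (m : ℕ) : ℝ := ∏ i ∈ Finset.range m, (a + i)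

/-- Jacobi polynomial `P_n^{(α,β)}(x)`. -/
noncomputable def jacobiP (α β : ℝ) (n : ℕ) (x : ℝ) : ℝ :=
  ∑ i ∈ Finset.range (n + 1),
    poch (α + i + 1) (n - i) * poch (n + α + β + 1) i /
      ((Nat.factorial (n - i) : ℝ) * (Nat.factorial i : ℝ)) * ((x - 1) / 2) ^ i

/-- Generalized Laguerre polynomial `L_n^{(α)}(x)`. -/
noncomputable def laguerreL (α : ℝ) (n : ℕ) (x : ℝ) : ℝ :=
  ∑ i ∈ Finset.range (n + 1),
    poch (α + i + 1) (n - i) / ((Nat.factorial (n - i) : ℝ) * (Nat.factorial i : ℝ)) * (-x) ^ i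

/-- Laguerre–Jacobi Koornwinder polynomial
`P^{(α,β)}_{n,k}(x,y) = L^{(α+2k+1)}_{n-k}(x) · x^k · P^{(β,0)}_k(y/x)`. -/
noncomputable def ljP (α β : ℝ) (n k : ℕ) (x y : ℝ) : ℝ :=
  laguerreL (α + 2 * k + 1) (n - k) x * x ^ k * jacobiP β 0 k (y / x)

/-- Squared norm constant `s_{n,k}^{(α,β)}` of the Laguerre–Jacobi Koornwinder polynomials. -/
noncomputable def sconst (α β : ℝ) (n k : ℕ) : ℝ :=
  2 ^ (β + 1) * Real.Gamma (α + n + k + 2) / ((Nat.factorial (n - k) : ℝ) * (β + 2 * k + 1))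


open Set

lemma poch_zero (a : ℝ) : poch a 0 = 1 := by simp [poch]

lemma poch_succ (a : ℝ) (m : ℕ) : poch a (m + 1) = poch a m * (a + m) := by
  simp [poch, Finset.prod_range_succ]

lemma poch_succ' (a : ℝ) (m : ℕ) : poch a (m + 1) = a * poch (a + 1) m := by
  rw [poch, Finset.prod_range_succ']
  simp only [poch]
  rw [mul_comm]
  congr 1
  · simp
  · apply Finset.prod_congr rfl
    intro i _
    push_cast
    ring

lemma poch_add (a : ℝ) (m l : ℕ) : poch a (m + l) = poch a m * poch (a + m) l := by
  rw [poch, Finset.prod_range_add]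
  congr 1
  apply Finset.prod_congr rfl
  intro i _
  push_cast
  ring

lemma poch_pos {a : ℝ} (ha : 0 < a) (m : ℕ) : 0 < poch a m := by
  apply Finset.prod_pos
  intro i _
  positivity

lemma poch_neg_nat_eq_zero {p n : ℕ} (h : p < n) : poch (-(p : ℝ)) n = 0 := by
  apply Finset.prod_eq_zero (Finset.mem_range.2 h)
  simp

lemma poch_neg_nat_self (n : ℕ) : poch (-(n : ℝ)) n = (-1) ^ n * n.factorial := by
  induction n with
  | zero => simp [poch]
  | succ n ih =>
    rw [poch_succ']
    have : (-(↑(n+1) : ℝ) + 1) = -(n : ℝ) := by push_cast; ring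
    rw [this, ih, Nat.factorial_succ]
    push_cast
    ring

lemma Gamma_poch {s : ℝ} (hs : 0 < s) (m : ℕ) :
    Real.Gamma (s + m) = poch s m * Real.Gamma s := by
  induction m with
  | zero => simp [poch]
  | succ m ih =>
    have h1 : s + (m + 1 : ℕ) = (s + m) + 1 := by push_cast; ring
    rw [h1, Real.Gamma_add_one (by positivity), ih, poch_succ]
    ring

/-- Chu–Vandermonde identity in cleared form. -/
lemma vandermonde (n : ℕ) (b c : ℝ) :
    ∑ i ∈ Finset.range (n + 1),
      (-1 : ℝ) ^ i * (n.choose i) * poch b i * poch (c + i) (n - i) = poch (c - b) n := by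
  induction n generalizing b c with
  | zero => simp [poch]
  | succ n ih =>
    have key : ∀ i ∈ Finset.range (n + 1),
        (-1:ℝ)^(i+1) * (((n+1).choose (i+1) : ℕ) : ℝ) * poch b (i+1) * poch (c + ((i+1 : ℕ) : ℝ)) (n + 1 - (i+1))
        = (-1:ℝ)^(i+1) * (n.choose (i+1)) * poch b (i+1) * poch (c + ((i+1 : ℕ) : ℝ)) (n - i)
          - (-1:ℝ)^i * (n.choose i) * (b * poch (b+1) i * poch ((c+1) + i) (n - i)) := by
      intro i hi
      rw [Nat.choose_succ_succ]
      have h2 : poch b (i+1) = b * poch (b+1) i := poch_succ' b i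
      have h3 : (c + ((i : ℝ) + 1)) = (c + 1) + i := by ring
      have h4 : n + 1 - (i + 1) = n - i := by omega
      push_cast
      rw [h2, h3, Nat.succ_eq_add_one]
      ring
    rw [Finset.sum_range_succ'] -- peel i = 0
    rw [Finset.sum_congr rfl key, Finset.sum_sub_distrib]
    have hA : ∑ i ∈ Finset.range (n + 1),
        (-1:ℝ)^(i+1) * ((n.choose (i+1) : ℕ) : ℝ) * poch b (i+1) * poch (c + ((i+1 : ℕ) : ℝ)) (n - i)
        + (-1:ℝ)^0 * (((n+1).choose 0 : ℕ) : ℝ) * poch b 0 * poch (c + ((0:ℕ) : ℝ)) (n + 1 - 0)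
        = (c + n) * poch (c - b) n := by
      have hg : ∑ i ∈ Finset.range (n + 2),
          (-1:ℝ)^i * (n.choose i) * poch b i * poch (c + i) (n + 1 - i)
          = ∑ i ∈ Finset.range (n + 1),
            (-1:ℝ)^(i+1) * ((n.choose (i+1) : ℕ) : ℝ) * poch b (i+1) * poch (c + ((i+1 : ℕ) : ℝ)) (n - i)
            + (-1:ℝ)^0 * (((n+1).choose 0 : ℕ) : ℝ) * poch b 0 * poch (c + ((0:ℕ) : ℝ)) (n + 1 - 0) := by
        rw [Finset.sum_range_succ']
        congr 1
        · apply Finset.sum_congr rfl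
          intro i hi
          have h4 : n + 1 - (i + 1) = n - i := by omega
          rw [h4]
        · norm_num
      rw [← hg, Finset.sum_range_succ]
      have hz : ((-1:ℝ)^(n+1) * ((n.choose (n+1) : ℕ) : ℝ) * poch b (n+1) * poch (c + ((n+1:ℕ) : ℝ)) (n + 1 - (n+1))) = 0 := by
        simp [Nat.choose_succ_self]
      rw [hz, add_zero]
      have hterm : ∀ i ∈ Finset.range (n + 1),
          (-1:ℝ)^i * (n.choose i) * poch b i * poch (c + i) (n + 1 - i)
          = (c + n) * ((-1:ℝ)^i * (n.choose i) * poch b i * poch (c + i) (n - i)) := by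
        intro i hi
        rw [Finset.mem_range] at hi
        have hle : i ≤ n := Nat.lt_succ_iff.mp hi
        have h1 : n + 1 - i = (n - i) + 1 := by omega
        rw [h1, poch_succ]
        have h2 : ((n - i : ℕ) : ℝ) = (n : ℝ) - i := by
          rw [Nat.cast_sub hle]
        rw [h2]
        ring
      rw [Finset.sum_congr rfl hterm, ← Finset.mul_sum, ih]
    have hB : ∑ i ∈ Finset.range (n + 1),
        (-1:ℝ)^i * (n.choose i) * (b * poch (b+1) i * poch ((c+1) + i) (n - i))
        = b * poch (c - b) n := by
      have hterm : ∀ i ∈ Finset.range (n + 1),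
          (-1:ℝ)^i * (n.choose i) * (b * poch (b+1) i * poch ((c+1) + i) (n - i))
          = b * ((-1:ℝ)^i * (n.choose i) * poch (b+1) i * poch ((c+1) + i) (n - i)) := by
        intro i _; ring
      rw [Finset.sum_congr rfl hterm, ← Finset.mul_sum, ih]
      have h5 : (c + 1 - (b + 1)) = c - b := by ring
      rw [h5]
    rw [hB, sub_add_eq_add_sub, hA, poch_succ]
    ring


lemma integrableOn_rpow_exp {s : ℝ} (hs : -1 < s) :
    IntegrableOn (fun x : ℝ => x ^ s * Real.exp (-x)) (Ioi 0) := by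
  have h := Real.GammaIntegral_convergent (show (0:ℝ) < s + 1 by linarith)
  simpa [add_sub_cancel_right, mul_comm] using h

lemma integral_rpow_exp {s : ℝ} (hs : -1 < s) :
    ∫ x in Ioi (0:ℝ), x ^ s * Real.exp (-x) = Real.Gamma (s + 1) := by
  rw [Real.Gamma_eq_integral (show (0:ℝ) < s + 1 by linarith)]
  simp [add_sub_cancel_right, mul_comm]

lemma lag_pointwise (a s : ℝ) (m : ℕ) {x : ℝ} (hx : x ∈ Ioi (0:ℝ)) :
    laguerreL a m x * (x ^ s * Real.exp (-x)) =
      ∑ i ∈ Finset.range (m + 1),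
        (poch (a + i + 1) (m - i) / ((Nat.factorial (m - i) : ℝ) * (Nat.factorial i : ℝ)))
          * (-1 : ℝ) ^ i * (x ^ (s + i) * Real.exp (-x)) := by
  rw [laguerreL, Finset.sum_mul]
  apply Finset.sum_congr rfl
  intro i _
  have hx' : (0:ℝ) < x := hx
  have h1 : (-x) ^ i = (-1 : ℝ) ^ i * x ^ i := by
    rw [neg_eq_neg_one_mul, mul_pow]
  have h2 : x ^ (s + (i:ℝ)) = x ^ s * x ^ (i:ℕ) := by
    rw [Real.rpow_add hx', Real.rpow_natCast]
  rw [h1, h2]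
  ring

lemma lag_integrable (a : ℝ) {s : ℝ} (hs : -1 < s) (m : ℕ) :
    IntegrableOn (fun x => laguerreL a m x * (x ^ s * Real.exp (-x))) (Ioi 0) := by
  apply IntegrableOn.congr_fun ?_ (fun x hx => (lag_pointwise a s m hx).symm) measurableSet_Ioi
  apply MeasureTheory.integrable_finset_sum
  intro i _
  apply Integrable.const_mul
  exact integrableOn_rpow_exp (by push_cast; linarith)

lemma lag_expand (a : ℝ) {s : ℝ} (hs : -1 < s) (m : ℕ) :
    ∫ x in Ioi (0:ℝ), laguerreL a m x * (x ^ s * Real.exp (-x)) =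
      ∑ i ∈ Finset.range (m + 1),
        (poch (a + i + 1) (m - i) / ((Nat.factorial (m - i) : ℝ) * (Nat.factorial i : ℝ)))
          * (-1 : ℝ) ^ i * Real.Gamma (s + i + 1) := by
  rw [setIntegral_congr_fun measurableSet_Ioi (fun x hx => lag_pointwise a s m hx)]
  rw [MeasureTheory.integral_finset_sum]
  · apply Finset.sum_congr rfl
    intro i _
    rw [MeasureTheory.integral_const_mul, integral_rpow_exp (by push_cast; linarith)]
  · intro i _
    apply Integrable.const_mul
    exact integrableOn_rpow_exp (by push_cast; linarith)

lemma fact_inv_eq (m i : ℕ) (h : i ≤ m) :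
    (1 : ℝ) / ((Nat.factorial (m - i) : ℝ) * (Nat.factorial i : ℝ))
      = (m.choose i : ℝ) / (Nat.factorial m : ℝ) := by
  have key := Nat.choose_mul_factorial_mul_factorial h
  have h1 : (0:ℝ) < (Nat.factorial (m - i) : ℝ) := by positivity
  have h2 : (0:ℝ) < (Nat.factorial i : ℝ) := by positivity
  have h3 : (0:ℝ) < (Nat.factorial m : ℝ) := by positivity
  field_simp
  have : ((m.choose i : ℕ) : ℝ) * (Nat.factorial i : ℝ) * (Nat.factorial (m - i) : ℝ)
      = (Nat.factorial m : ℝ) := by exact_mod_cast congrArg (Nat.cast : ℕ → ℝ) key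
  linarith [this]

lemma lag_moment (a : ℝ) (ha : -1 < a) (m p : ℕ) :
    ∫ x in Ioi (0:ℝ), laguerreL a m x * (x ^ (a + (p:ℝ)) * Real.exp (-x)) =
      Real.Gamma (a + p + 1) * poch (-(p:ℝ)) m / (Nat.factorial m : ℝ) := by
  rw [lag_expand a (by push_cast; linarith) m]
  have key : ∀ i ∈ Finset.range (m + 1),
      (poch (a + i + 1) (m - i) / ((Nat.factorial (m - i) : ℝ) * (Nat.factorial i : ℝ)))
        * (-1 : ℝ) ^ i * Real.Gamma (a + (p:ℝ) + i + 1)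
      = (Real.Gamma (a + p + 1) / (Nat.factorial m : ℝ)) *
        ((-1:ℝ) ^ i * (m.choose i) * poch (a + p + 1) i * poch ((a + 1) + i) (m - i)) := by
    intro i hi
    rw [Finset.mem_range] at hi
    have hle : i ≤ m := Nat.lt_succ_iff.mp hi
    have hg : Real.Gamma (a + (p:ℝ) + i + 1) = poch (a + p + 1) i * Real.Gamma (a + p + 1) := by
      have h0 : (0:ℝ) < a + p + 1 := by
        have : (0:ℝ) ≤ p := Nat.cast_nonneg p
        linarith
      have h1 : a + (p:ℝ) + i + 1 = (a + p + 1) + i := by ring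
      rw [h1, Gamma_poch h0]
    have hc : poch (a + (i:ℝ) + 1) (m - i) = poch ((a + 1) + i) (m - i) := by
      congr 1; ring
    rw [hg, hc]
    have hfact : ((m.choose i : ℝ)) * (Nat.factorial i : ℝ) * (Nat.factorial (m - i) : ℝ)
        = (Nat.factorial m : ℝ) := by
      exact_mod_cast Nat.choose_mul_factorial_mul_factorial hle
    field_simp
    rw [← hfact]
    ring
  rw [Finset.sum_congr rfl key, ← Finset.mul_sum, vandermonde m (a + p + 1) (a + 1)]
  have : (a + 1) - (a + p + 1) = -(p:ℝ) := by ring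
  rw [this]
  ring

lemma lag_orth_le (a : ℝ) (ha : -1 < a) (n m : ℕ) (hnm : n ≤ m) :
    ∫ x in Ioi (0:ℝ), laguerreL a n x * laguerreL a m x * (x ^ a * Real.exp (-x)) =
      if n = m then Real.Gamma (a + n + 1) / (Nat.factorial n : ℝ) else 0 := by
  have hpt : ∀ x ∈ Ioi (0:ℝ),
      laguerreL a n x * laguerreL a m x * (x ^ a * Real.exp (-x)) =
      ∑ i ∈ Finset.range (n + 1),
        (poch (a + i + 1) (n - i) / ((Nat.factorial (n - i) : ℝ) * (Nat.factorial i : ℝ)))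
          * (-1 : ℝ) ^ i * (laguerreL a m x * (x ^ (a + (i:ℝ)) * Real.exp (-x))) := by
    intro x hx
    have hx' : (0:ℝ) < x := hx
    nth_rewrite 1 [laguerreL]
    rw [Finset.sum_mul, Finset.sum_mul]
    apply Finset.sum_congr rfl
    intro i _
    have h1 : (-x) ^ i = (-1 : ℝ) ^ i * x ^ i := by rw [neg_eq_neg_one_mul, mul_pow]
    have h2 : x ^ (a + (i:ℝ)) = x ^ a * x ^ (i:ℕ) := by
      rw [Real.rpow_add hx', Real.rpow_natCast]
    rw [h1, h2]
    ring
  rw [setIntegral_congr_fun measurableSet_Ioi hpt]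
  rw [MeasureTheory.integral_finset_sum _ (fun i _ => by
    apply Integrable.const_mul
    exact lag_integrable a (by
      have : (0:ℝ) ≤ i := Nat.cast_nonneg i
      linarith) m)]
  have hterm : ∀ i ∈ Finset.range (n + 1),
      (∫ x in Ioi (0:ℝ),
        (poch (a + i + 1) (n - i) / ((Nat.factorial (n - i) : ℝ) * (Nat.factorial i : ℝ)))
          * (-1 : ℝ) ^ i * (laguerreL a m x * (x ^ (a + (i:ℝ)) * Real.exp (-x))))
      = (poch (a + i + 1) (n - i) / ((Nat.factorial (n - i) : ℝ) * (Nat.factorial i : ℝ)))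
          * (-1 : ℝ) ^ i * (Real.Gamma (a + i + 1) * poch (-(i:ℝ)) m / (Nat.factorial m : ℝ)) := by
    intro i _
    rw [MeasureTheory.integral_const_mul, lag_moment a ha m i]
  rw [Finset.sum_congr rfl hterm]
  rcases eq_or_lt_of_le hnm with heq | hlt
  · subst heq
    simp only [if_pos rfl]
    rw [Finset.sum_range_succ]
    have hzero : ∀ i ∈ Finset.range n,
        (poch (a + i + 1) (n - i) / ((Nat.factorial (n - i) : ℝ) * (Nat.factorial i : ℝ)))
          * (-1 : ℝ) ^ i * (Real.Gamma (a + i + 1) * poch (-(i:ℝ)) n / (Nat.factorial n : ℝ)) = 0 := by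
      intro i hi
      rw [Finset.mem_range] at hi
      rw [poch_neg_nat_eq_zero hi]
      ring
    rw [Finset.sum_eq_zero hzero, zero_add, poch_neg_nat_self n]
    simp only [Nat.sub_self, poch_zero, Nat.factorial_zero]
    have hne : ((Nat.factorial n : ℝ)) ≠ 0 := by positivity
    field_simp
    ring_nf
    rw [pow_mul]
    simp [sq, ← pow_add, Even.neg_one_pow (⟨n, rfl⟩ : Even (n + n))]
    field_simp
  · rw [if_neg (Nat.ne_of_lt hlt)]
    apply Finset.sum_eq_zero
    intro i hi
    rw [Finset.mem_range] at hi
    have : i < m := by omega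
    rw [poch_neg_nat_eq_zero this]
    ring
lemma prod_erase_eval (k i : ℕ) (hik : i ≤ k) :
    ∏ l ∈ (Finset.range (k+1)).erase i, ((l : ℝ) - i)
      = (-1 : ℝ)^i * (Nat.factorial i : ℝ) * (Nat.factorial (k - i) : ℝ) := by
  have hset : (Finset.range (k+1)).erase i = Finset.range i ∪ Finset.Ico (i+1) (k+1) := by
    ext l
    simp only [Finset.mem_erase, Finset.mem_range, Finset.mem_union, Finset.mem_Ico]
    omega
  have hdisj : Disjoint (Finset.range i) (Finset.Ico (i+1) (k+1)) := by
    apply Finset.disjoint_left.mpr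
    intro l hl hl'
    simp only [Finset.mem_range] at hl
    simp only [Finset.mem_Ico] at hl'
    omega
  rw [hset, Finset.prod_union hdisj]
  have hA : ∏ l ∈ Finset.range i, ((l : ℝ) - i) = (-1 : ℝ)^i * (Nat.factorial i : ℝ) := by
    rw [← Finset.prod_range_reflect (fun l => ((l : ℝ) - i)) i]
    have : ∀ l ∈ Finset.range i, ((i - 1 - l : ℕ) : ℝ) - (i:ℝ) = -((l:ℝ) + 1) := by
      intro l hl
      rw [Finset.mem_range] at hl
      have : ((i - 1 - l : ℕ) : ℝ) = (i:ℝ) - 1 - l := by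
        rw [Nat.cast_sub (by omega), Nat.cast_sub (by omega)]
        norm_num
      rw [this]; ring
    rw [Finset.prod_congr rfl this]
    have : ∀ l ∈ Finset.range i, -((l:ℝ) + 1) = (-1) * ((l:ℝ) + 1) := by intro l _; ring
    rw [Finset.prod_congr rfl this, Finset.prod_mul_distrib, Finset.prod_const, Finset.card_range]
    have hfac : ∏ l ∈ Finset.range i, ((l:ℝ) + 1) = (Nat.factorial i : ℝ) := by
      exact_mod_cast congrArg (Nat.cast : ℕ → ℝ) (Finset.prod_range_add_one_eq_factorial i)
    rw [hfac]
  have hB : ∏ l ∈ Finset.Ico (i+1) (k+1), ((l : ℝ) - i) = (Nat.factorial (k - i) : ℝ) := by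
    rw [Finset.prod_Ico_eq_prod_range]
    have h1 : k + 1 - (i + 1) = k - i := by omega
    rw [h1]
    have : ∀ l ∈ Finset.range (k - i), ((i + 1 + l : ℕ) : ℝ) - (i:ℝ) = (l:ℝ) + 1 := by
      intro l _; push_cast; ring
    rw [Finset.prod_congr rfl this]
    exact_mod_cast congrArg (Nat.cast : ℕ → ℝ) (Finset.prod_range_add_one_eq_factorial (k - i))
  rw [hA, hB]

/-- The key partial-fraction polynomial identity for Jacobi moments. -/
lemma jac_poly_identity (β : ℝ) (k : ℕ) (z : ℝ) :
    ∑ i ∈ Finset.range (k+1),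
      ((-1:ℝ)^i * poch (β + i + 1) (k - i) * poch ((k:ℝ) + β + 1) i /
        ((Nat.factorial (k - i) : ℝ) * (Nat.factorial i : ℝ)))
        * ∏ l ∈ (Finset.range (k+1)).erase i, (z + l)
      = ∏ l ∈ Finset.range k, (β + 1 + l - z) := by
  -- define the two polynomials
  set cf : ℕ → ℝ := fun i => (-1:ℝ)^i * poch (β + i + 1) (k - i) * poch ((k:ℝ) + β + 1) i /
        ((Nat.factorial (k - i) : ℝ) * (Nat.factorial i : ℝ)) with hcf
  set P : Polynomial ℝ := ∑ i ∈ Finset.range (k+1),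
      Polynomial.C (cf i) * ∏ l ∈ (Finset.range (k+1)).erase i, (Polynomial.X + Polynomial.C (l:ℝ)) with hP
  set Q : Polynomial ℝ := ∏ l ∈ Finset.range k, (Polynomial.C (β + 1 + (l:ℝ)) - Polynomial.X) with hQ
  have hPQ : P = Q := by
    have hdeg : (P - Q).natDegree < k + 1 := by
      have hdP : P.natDegree ≤ k := by
        apply Polynomial.natDegree_sum_le_of_forall_le
        intro i hi
        apply le_trans (Polynomial.natDegree_mul_le)
        rw [Polynomial.natDegree_C, zero_add]
        apply le_trans (Polynomial.natDegree_prod_le _ _)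
        apply le_trans (Finset.sum_le_card_nsmul _ _ 1 ?_)
        · rw [Finset.mem_range] at hi
          rw [Finset.card_erase_of_mem (by simp [Finset.mem_range]; omega), Finset.card_range]
          simp
        · intro l _
          exact le_of_eq (Polynomial.natDegree_X_add_C _)
      have hdQ : Q.natDegree ≤ k := by
        apply le_trans (Polynomial.natDegree_prod_le _ _)
        apply le_trans (Finset.sum_le_card_nsmul _ _ 1 ?_)
        · rw [Finset.card_range]; simp
        · intro l _
          have h := Polynomial.natDegree_sub_le (Polynomial.C (β + 1 + (l:ℝ))) Polynomial.X
          rw [Polynomial.natDegree_C, Polynomial.natDegree_X] at h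
          simpa using h
      have := Polynomial.natDegree_sub_le P Q
      omega
    have heval : ∀ i : Fin (k+1), Polynomial.eval (-(i:ℝ)) (P - Q) = 0 := by
      intro ⟨i, hi⟩
      have hik : i ≤ k := by omega
      simp only [Polynomial.eval_sub]
      have hevP : Polynomial.eval (-(i:ℝ)) P = cf i * ∏ l ∈ (Finset.range (k+1)).erase i, ((l:ℝ) - i) := by
        rw [hP, Polynomial.eval_finset_sum]
        rw [Finset.sum_eq_single_of_mem i (by simp [Finset.mem_range]; omega)]
        · rw [Polynomial.eval_mul, Polynomial.eval_C, Polynomial.eval_prod]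
          congr 1
          apply Finset.prod_congr rfl
          intro l _
          simp only [Polynomial.eval_add, Polynomial.eval_X, Polynomial.eval_C]
          ring
        · intro i' hi' hne
          rw [Polynomial.eval_mul, Polynomial.eval_prod]
          have : Polynomial.eval (-(i:ℝ)) (Polynomial.X + Polynomial.C ((i:ℕ):ℝ)) = 0 := by simp
          rw [Finset.prod_eq_zero (Finset.mem_erase.mpr ⟨Ne.symm hne, by simp [Finset.mem_range]; omega⟩) this]
          ring
      have hevQ : Polynomial.eval (-(i:ℝ)) Q = ∏ l ∈ Finset.range k, (β + 1 + l + i) := by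
        rw [hQ, Polynomial.eval_prod]
        apply Finset.prod_congr rfl
        intro l _
        simp only [Polynomial.eval_sub, Polynomial.eval_add, Polynomial.eval_C, Polynomial.eval_X]
        ring
      rw [hevP, hevQ, prod_erase_eval k i hik]
      -- now the pochhammer identity
      have hprod : ∏ l ∈ Finset.range k, (β + 1 + (l:ℝ) + i) = poch (β + 1 + i) k := by
        rw [poch]
        apply Finset.prod_congr rfl
        intro l _
        ring
      rw [hprod]
      have hsplit : poch (β + 1 + i) k = poch (β + i + 1) (k - i) * poch ((k:ℝ) + β + 1) i := by
        have h1 : poch (β + 1 + (i:ℝ)) k = poch (β + 1 + (i:ℝ)) ((k - i) + i) := by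
          rw [Nat.sub_add_cancel hik]
        rw [h1, poch_add]
        have e2 : β + 1 + (i:ℝ) + ((k - i : ℕ):ℝ) = (k:ℝ) + β + 1 := by
          rw [Nat.cast_sub hik]; ring
        rw [e2, show β + 1 + (i:ℝ) = β + i + 1 from by ring]
      rw [hsplit, hcf]
      have hfi : ((Nat.factorial i : ℝ)) ≠ 0 := by positivity
      have hfki : ((Nat.factorial (k - i) : ℝ)) ≠ 0 := by positivity
      field_simp
      ring_nf
      rw [pow_mul, sq, ← pow_add, Even.neg_one_pow (⟨i, rfl⟩ : Even (i + i))]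
      ring
    have := Polynomial.eq_zero_of_natDegree_lt_card_of_eval_eq_zero (P - Q)
      (f := fun i : Fin (k+1) => -(i:ℝ)) (by
        intro a b hab
        simp only [neg_inj, Nat.cast_inj] at hab
        exact Fin.ext (by exact_mod_cast hab)) heval (by simpa using hdeg)
    have hPQ' : P - Q = 0 := this
    linear_combination (norm := ring_nf) hPQ'
  -- evaluate the polynomial identity at z
  have := congrArg (Polynomial.eval z) hPQ
  rw [hP, hQ, Polynomial.eval_finset_sum, Polynomial.eval_prod] at this
  calc ∑ i ∈ Finset.range (k+1),
      cf i * ∏ l ∈ (Finset.range (k+1)).erase i, (z + l)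
      = ∑ i ∈ Finset.range (k+1), Polynomial.eval z
          (Polynomial.C (cf i) * ∏ l ∈ (Finset.range (k+1)).erase i, (Polynomial.X + Polynomial.C (l:ℝ))) := by
        apply Finset.sum_congr rfl
        intro i _
        rw [Polynomial.eval_mul, Polynomial.eval_C, Polynomial.eval_prod]
        congr 1
        apply Finset.prod_congr rfl
        intro l _
        simp only [Polynomial.eval_add, Polynomial.eval_X, Polynomial.eval_C]
    _ = ∏ l ∈ Finset.range k, (β + 1 + l - z) := by
        rw [this]
        apply Finset.prod_congr rfl
        intro l _
        simp only [Polynomial.eval_sub, Polynomial.eval_add, Polynomial.eval_C, Polynomial.eval_X]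
lemma prod_range_cast_sub (i : ℕ) :
    ∏ l ∈ Finset.range i, ((l : ℝ) - i) = (-1 : ℝ)^i * (Nat.factorial i : ℝ) := by
  rw [← Finset.prod_range_reflect (fun l => ((l : ℝ) - i)) i]
  have h1 : ∀ l ∈ Finset.range i, ((i - 1 - l : ℕ) : ℝ) - (i:ℝ) = -((l:ℝ) + 1) := by
    intro l hl
    rw [Finset.mem_range] at hl
    have : ((i - 1 - l : ℕ) : ℝ) = (i:ℝ) - 1 - l := by
      rw [Nat.cast_sub (by omega), Nat.cast_sub (by omega)]
      norm_num
    rw [this]; ring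
  rw [Finset.prod_congr rfl h1]
  have h2 : ∀ l ∈ Finset.range i, -((l:ℝ) + 1) = (-1) * ((l:ℝ) + 1) := by intro l _; ring
  rw [Finset.prod_congr rfl h2, Finset.prod_mul_distrib, Finset.prod_const, Finset.card_range]
  have hfac : ∏ l ∈ Finset.range i, ((l:ℝ) + 1) = (Nat.factorial i : ℝ) := by
    exact_mod_cast congrArg (Nat.cast : ℕ → ℝ) (Finset.prod_range_add_one_eq_factorial i)
  rw [hfac]

/-- Partial fraction version of the polynomial identity. -/
lemma jac_frac (β : ℝ) (k : ℕ) (z : ℝ) (hz : ∀ l : ℕ, l < k + 1 → z + (l:ℝ) ≠ 0) :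
    ∑ i ∈ Finset.range (k+1),
      ((-1:ℝ)^i * poch (β + i + 1) (k - i) * poch ((k:ℝ) + β + 1) i /
        ((Nat.factorial (k - i) : ℝ) * (Nat.factorial i : ℝ))) / (z + i)
      = (∏ l ∈ Finset.range k, (β + 1 + l - z)) / ∏ l ∈ Finset.range (k+1), (z + l) := by
  have hD : (∏ l ∈ Finset.range (k+1), (z + (l:ℝ))) ≠ 0 :=
    Finset.prod_ne_zero_iff.mpr (fun l hl => hz l (Finset.mem_range.mp hl))
  rw [eq_div_iff hD, Finset.sum_mul]
  rw [← jac_poly_identity β k z]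
  apply Finset.sum_congr rfl
  intro i hi
  rw [Finset.mem_range] at hi
  have hzi : z + (i:ℝ) ≠ 0 := hz i hi
  rw [← Finset.mul_prod_erase (Finset.range (k+1)) (fun l => z + (l:ℝ)) (Finset.mem_range.mpr hi)]
  field_simp

lemma integrableOn_one_sub_rpow {r : ℝ} (hr : -1 < r) :
    IntegrableOn (fun t : ℝ => (1 - t) ^ r) (Ioo (-1:ℝ) 1) := by
  have h0 : IntervalIntegrable (fun x : ℝ => x ^ r) volume 0 2 :=
    intervalIntegral.intervalIntegrable_rpow' hr
  have h1 := h0.comp_sub_left 1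
  rw [intervalIntegrable_iff] at h1
  have : Set.uIoc (1 - (0:ℝ)) (1 - 2) = Set.Ioc (-1:ℝ) 1 := by
    rw [Set.uIoc_comm]
    norm_num [Set.uIoc_of_le]
  rw [this] at h1
  exact h1.mono_set Set.Ioo_subset_Ioc_self

lemma integral_one_sub_rpow {r : ℝ} (hr : -1 < r) :
    ∫ t in Ioo (-1:ℝ) 1, (1 - t) ^ r = 2 ^ (r + 1) / (r + 1) := by
  rw [← MeasureTheory.integral_Ioc_eq_integral_Ioo,
    ← intervalIntegral.integral_of_le (by norm_num : (-1:ℝ) ≤ 1)]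
  have h1 : ∫ t in (-1:ℝ)..1, (1 - t) ^ r = ∫ x in (1 - (1:ℝ))..(1 - (-1:ℝ)), x ^ r :=
    intervalIntegral.integral_comp_sub_left (fun x => x ^ r) 1
  rw [h1]
  norm_num
  rw [integral_rpow (Or.inl hr)]
  rw [Real.zero_rpow (by linarith)]
  norm_num

lemma jac_term_integrable {β : ℝ} (hβ : -1 < β) (q : ℕ) :
    IntegrableOn (fun t : ℝ => ((t - 1)/2)^q * (1 - t) ^ β) (Ioo (-1:ℝ) 1) := by
  have key : ∀ t ∈ Ioo (-1:ℝ) 1,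
      ((-1:ℝ)^q / 2^q) * (1 - t) ^ (β + q) = ((t - 1)/2)^q * (1 - t) ^ β := by
    intro t ht
    have h1t : (0:ℝ) < 1 - t := by simp only [Set.mem_Ioo] at ht; linarith [ht.2]
    have h2 : ((t - 1)/2)^q = (-1:ℝ)^q * (1-t)^q / 2^q := by
      rw [show (t-1)/2 = (-1) * (1 - t) / 2 from by ring]
      rw [div_pow, mul_pow]
    rw [h2]
    rw [Real.rpow_add h1t, Real.rpow_natCast]
    ring
  apply IntegrableOn.congr_fun ?_ key measurableSet_Ioo
  exact (integrableOn_one_sub_rpow (by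
    have : (0:ℝ) ≤ q := Nat.cast_nonneg q
    linarith)).const_mul _

lemma jac_term (β : ℝ) (hβ : -1 < β) (q : ℕ) :
    ∫ t in Ioo (-1:ℝ) 1, ((t - 1)/2)^q * (1 - t) ^ β
      = (-1:ℝ)^q * 2 ^ (β + 1) / (β + q + 1) := by
  have key : ∀ t ∈ Ioo (-1:ℝ) 1,
      ((t - 1)/2)^q * (1 - t) ^ β = ((-1:ℝ)^q / 2^q) * (1 - t) ^ (β + q) := by
    intro t ht
    have h1t : (0:ℝ) < 1 - t := by simp only [Set.mem_Ioo] at ht; linarith [ht.2]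
    have h2 : ((t - 1)/2)^q = (-1:ℝ)^q * (1-t)^q / 2^q := by
      rw [show (t-1)/2 = (-1) * (1 - t) / 2 from by ring]
      rw [div_pow, mul_pow]
    rw [h2, Real.rpow_add h1t, Real.rpow_natCast]
    ring
  rw [setIntegral_congr_fun measurableSet_Ioo key, MeasureTheory.integral_const_mul,
    integral_one_sub_rpow (by
      have : (0:ℝ) ≤ q := Nat.cast_nonneg q
      linarith)]
  have h3 : (2:ℝ) ^ (β + (q:ℝ) + 1) = 2 ^ (β+1) * 2 ^ q := by
    rw [← Real.rpow_natCast 2 q, ← Real.rpow_add (by norm_num)]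
    ring_nf
  rw [h3]
  have h4 : (2:ℝ)^q ≠ 0 := by positivity
  have h5 : β + (q:ℝ) + 1 ≠ 0 := by
    have : (0:ℝ) ≤ q := Nat.cast_nonneg q
    linarith
  field_simp
lemma jac_pointwise (β : ℝ) (k p : ℕ) {t : ℝ} (ht : t ∈ Ioo (-1:ℝ) 1) :
    jacobiP β 0 k t * (((t - 1)/2)^p * (1 - t) ^ β)
      = ∑ i ∈ Finset.range (k+1),
          (poch (β + i + 1) (k - i) * poch ((k:ℝ) + β + 0 + 1) i /
            ((Nat.factorial (k - i) : ℝ) * (Nat.factorial i : ℝ)))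
          * (((t - 1)/2)^(i+p) * (1 - t) ^ β) := by
  rw [jacobiP, Finset.sum_mul]
  apply Finset.sum_congr rfl
  intro i _
  rw [pow_add]
  ring

lemma jac_mul_integrable {β : ℝ} (hβ : -1 < β) (k p : ℕ) :
    IntegrableOn (fun t => jacobiP β 0 k t * (((t - 1)/2)^p * (1 - t) ^ β)) (Ioo (-1:ℝ) 1) := by
  apply IntegrableOn.congr_fun ?_ (fun t ht => (jac_pointwise β k p ht).symm) measurableSet_Ioo
  apply MeasureTheory.integrable_finset_sum
  intro i _
  exact (jac_term_integrable hβ (i+p)).const_mul _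

lemma jac_moment (β : ℝ) (hβ : -1 < β) (k p : ℕ) :
    ∫ t in Ioo (-1:ℝ) 1, jacobiP β 0 k t * (((t - 1)/2)^p * (1 - t) ^ β)
      = ((-1:ℝ)^p * 2 ^ (β + 1)) *
        ((∏ l ∈ Finset.range k, ((l:ℝ) - p)) / ∏ l ∈ Finset.range (k+1), (β + (p:ℝ) + 1 + l)) := by
  rw [setIntegral_congr_fun measurableSet_Ioo (fun t ht => jac_pointwise β k p ht)]
  rw [MeasureTheory.integral_finset_sum _ (fun i _ => ((jac_term_integrable hβ (i+p)).const_mul _))]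
  have hterm : ∀ i ∈ Finset.range (k+1),
      (∫ t in Ioo (-1:ℝ) 1,
        (poch (β + i + 1) (k - i) * poch ((k:ℝ) + β + 0 + 1) i /
          ((Nat.factorial (k - i) : ℝ) * (Nat.factorial i : ℝ)))
        * (((t - 1)/2)^(i+p) * (1 - t) ^ β))
      = ((-1:ℝ)^p * 2 ^ (β + 1)) *
          (((-1:ℝ)^i * poch (β + i + 1) (k - i) * poch ((k:ℝ) + β + 1) i /
            ((Nat.factorial (k - i) : ℝ) * (Nat.factorial i : ℝ))) / ((β + (p:ℝ) + 1) + i)) := by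
    intro i _
    rw [MeasureTheory.integral_const_mul, jac_term β hβ (i+p)]
    have h1 : poch ((k:ℝ) + β + 0 + 1) i = poch ((k:ℝ) + β + 1) i := by congr 1; ring
    have h2 : ((i + p : ℕ) : ℝ) = (i:ℝ) + p := by push_cast; ring
    have h3 : (-1:ℝ)^(i+p) = (-1:ℝ)^i * (-1:ℝ)^p := pow_add (-1:ℝ) i p
    rw [h1, h2, h3]
    have h4 : β + ((i:ℝ) + p) + 1 = (β + (p:ℝ) + 1) + i := by ring
    rw [h4]
    ring
  rw [Finset.sum_congr rfl hterm, ← Finset.mul_sum]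
  congr 1
  have hz : ∀ l : ℕ, l < k + 1 → (β + (p:ℝ) + 1) + (l:ℝ) ≠ 0 := by
    intro l _
    have h5 : (0:ℝ) ≤ p := Nat.cast_nonneg p
    have h6 : (0:ℝ) ≤ l := Nat.cast_nonneg l
    linarith
  rw [jac_frac β k (β + (p:ℝ) + 1) hz]
  congr 1
  apply Finset.prod_congr rfl
  intro l _
  ring

lemma jac_orth_le (β : ℝ) (hβ : -1 < β) (j k : ℕ) (hjk : j ≤ k) :
    ∫ t in Ioo (-1:ℝ) 1, jacobiP β 0 k t * jacobiP β 0 j t * (1 - t) ^ β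
      = if k = j then 2 ^ (β + 1) / (β + 2 * k + 1) else 0 := by
  have hpt : ∀ t ∈ Ioo (-1:ℝ) 1,
      jacobiP β 0 k t * jacobiP β 0 j t * (1 - t) ^ β
      = ∑ p ∈ Finset.range (j+1),
          (poch (β + p + 1) (j - p) * poch ((j:ℝ) + β + 0 + 1) p /
            ((Nat.factorial (j - p) : ℝ) * (Nat.factorial p : ℝ)))
          * (jacobiP β 0 k t * (((t - 1)/2)^p * (1 - t) ^ β)) := by
    intro t ht
    nth_rewrite 2 [jacobiP]
    rw [Finset.mul_sum, Finset.sum_mul]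
    apply Finset.sum_congr rfl
    intro p _
    ring
  rw [setIntegral_congr_fun measurableSet_Ioo hpt]
  rw [MeasureTheory.integral_finset_sum _ (fun p _ => (jac_mul_integrable hβ k p).const_mul _)]
  have hterm : ∀ p ∈ Finset.range (j+1),
      (∫ t in Ioo (-1:ℝ) 1,
        (poch (β + p + 1) (j - p) * poch ((j:ℝ) + β + 0 + 1) p /
          ((Nat.factorial (j - p) : ℝ) * (Nat.factorial p : ℝ)))
        * (jacobiP β 0 k t * (((t - 1)/2)^p * (1 - t) ^ β)))
      = (poch (β + p + 1) (j - p) * poch ((j:ℝ) + β + 0 + 1) p /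
          ((Nat.factorial (j - p) : ℝ) * (Nat.factorial p : ℝ)))
        * (((-1:ℝ)^p * 2 ^ (β + 1)) *
          ((∏ l ∈ Finset.range k, ((l:ℝ) - p)) / ∏ l ∈ Finset.range (k+1), (β + (p:ℝ) + 1 + l))) := by
    intro p _
    rw [MeasureTheory.integral_const_mul, jac_moment β hβ k p]
  rw [Finset.sum_congr rfl hterm]
  rcases eq_or_lt_of_le hjk with heq | hlt
  · subst heq
    rw [if_pos rfl]
    rw [Finset.sum_range_succ]
    have hzero : ∀ p ∈ Finset.range j, (poch (β + p + 1) (j - p) * poch ((j:ℝ) + β + 0 + 1) p /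
          ((Nat.factorial (j - p) : ℝ) * (Nat.factorial p : ℝ)))
        * (((-1:ℝ)^p * 2 ^ (β + 1)) *
          ((∏ l ∈ Finset.range j, ((l:ℝ) - p)) / ∏ l ∈ Finset.range (j+1), (β + (p:ℝ) + 1 + l))) = 0 := by
      intro p hp
      rw [Finset.mem_range] at hp
      have : ∏ l ∈ Finset.range j, ((l:ℝ) - p) = 0 := by
        apply Finset.prod_eq_zero (Finset.mem_range.mpr hp)
        simp
      rw [this]
      simp
    rw [Finset.sum_eq_zero hzero, zero_add]
    rw [prod_range_cast_sub j]
    have hprod : ∏ l ∈ Finset.range (j+1), (β + (j:ℝ) + 1 + l) = poch (β + j + 1) (j+1) := by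
      rw [poch]
    rw [hprod]
    simp only [Nat.sub_self, poch_zero, Nat.factorial_zero, one_mul, Nat.cast_one]
    rw [poch_succ]
    have hppos : (0:ℝ) < poch (β + j + 1) j := by
      apply poch_pos
      have : (0:ℝ) ≤ j := Nat.cast_nonneg j
      linarith
    have hbj : β + (j:ℝ) + 1 + j = β + 2 * j + 1 := by ring
    rw [hbj]
    have hb2 : (0:ℝ) < β + 2 * j + 1 := by
      have : (0:ℝ) ≤ j := Nat.cast_nonneg j
      linarith
    have hfj : ((Nat.factorial j : ℝ)) ≠ 0 := by positivity
    have h1 : poch ((j:ℝ) + β + 0 + 1) j = poch (β + j + 1) j := by congr 1; ring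
    rw [h1]
    have hsq : (-1:ℝ)^j * (-1:ℝ)^j = 1 := by
      rw [← pow_add]; exact Even.neg_one_pow ⟨j, rfl⟩
    field_simp
    linear_combination (β + 2*(j:ℝ) + 1)⁻¹ * hsq
  · rw [if_neg (by omega)]
    apply Finset.sum_eq_zero
    intro p hp
    rw [Finset.mem_range] at hp
    have hpk : p < k := by omega
    have : ∏ l ∈ Finset.range k, ((l:ℝ) - p) = 0 := by
      apply Finset.prod_eq_zero (Finset.mem_range.mpr hpk)
      simp
    rw [this]
    simp

noncomputable def Amap (p : ℝ × ℝ) : ℝ × ℝ →L[ℝ] ℝ × ℝ :=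
  (ContinuousLinearMap.fst ℝ ℝ ℝ).prod
    (p.1 • ContinuousLinearMap.snd ℝ ℝ ℝ + p.2 • ContinuousLinearMap.fst ℝ ℝ ℝ)

lemma Amap_fderiv (p : ℝ × ℝ) :
    HasFDerivAt (fun q : ℝ × ℝ => (q.1, q.1 * q.2)) (Amap p) p :=
  HasFDerivAt.prodMk (hasFDerivAt_fst (p := p)) (HasFDerivAt.mul (hasFDerivAt_fst (p := p)) (hasFDerivAt_snd (p := p)))

lemma Amap_det (p : ℝ × ℝ) : (Amap p).det = p.1 := by
  have h : (Amap p).det = LinearMap.det ((Amap p) : ℝ × ℝ →ₗ[ℝ] ℝ × ℝ) := rfl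
  rw [h, ← LinearMap.det_toMatrix (Module.Basis.finTwoProd ℝ)]
  rw [Matrix.det_fin_two]
  simp [LinearMap.toMatrix_apply, Amap, Module.Basis.finTwoProd]

lemma cov_image :
    (fun q : ℝ × ℝ => (q.1, q.1 * q.2)) '' ((Ioi (0:ℝ)) ×ˢ (Ioo (-1:ℝ) 1))
      = {p : ℝ × ℝ | 0 < p.1 ∧ -p.1 < p.2 ∧ p.2 < p.1} := by
  ext ⟨x, y⟩
  simp only [Set.mem_image, Set.mem_prod, Set.mem_Ioi, Set.mem_Ioo, Set.mem_setOf_eq, Prod.mk.injEq,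
    Prod.exists]
  constructor
  · rintro ⟨a, t, ⟨ha, ht1, ht2⟩, rfl, rfl⟩
    refine ⟨ha, by nlinarith, by nlinarith⟩
  · rintro ⟨hx, hy1, hy2⟩
    refine ⟨x, y / x, ⟨hx, ?_, ?_⟩, rfl, by field_simp⟩
    · rw [neg_lt, ← neg_div]
      exact (div_lt_one hx).mpr (by linarith)
    · exact (div_lt_one hx).mpr hy2
    
lemma cov_inj : Set.InjOn (fun q : ℝ × ℝ => (q.1, q.1 * q.2)) ((Ioi (0:ℝ)) ×ˢ (Ioo (-1:ℝ) 1)) := by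
  rintro ⟨a, t⟩ ⟨ha, _⟩ ⟨a', t'⟩ ⟨ha', _⟩ h
  simp only [Prod.mk.injEq] at h
  obtain ⟨h1, h2⟩ := h
  subst h1
  simp only [Set.mem_Ioi] at ha
  exact Prod.ext rfl (by exact mul_left_cancel₀ (ne_of_gt ha) h2)

lemma cov_integral (F : ℝ × ℝ → ℝ) :
    ∫ p in {p : ℝ × ℝ | 0 < p.1 ∧ -p.1 < p.2 ∧ p.2 < p.1}, F p
      = ∫ q in (Ioi (0:ℝ)) ×ˢ (Ioo (-1:ℝ) 1), |q.1| • F (q.1, q.1 * q.2) := by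
  rw [← cov_image]
  rw [MeasureTheory.integral_image_eq_integral_abs_det_fderiv_smul volume
    (measurableSet_Ioi.prod measurableSet_Ioo)
    (fun q _ => (Amap_fderiv q).hasFDerivWithinAt) cov_inj F]
  apply setIntegral_congr_fun (measurableSet_Ioi.prod measurableSet_Ioo)
  intro q _
  simp only [Amap_det]
lemma lag_orth (a : ℝ) (ha : -1 < a) (n m : ℕ) :
    ∫ x in Ioi (0:ℝ), laguerreL a n x * laguerreL a m x * (x ^ a * Real.exp (-x)) =
      if n = m then Real.Gamma (a + n + 1) / (Nat.factorial n : ℝ) else 0 := by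
  rcases le_total n m with h | h
  · exact lag_orth_le a ha n m h
  · have hsym : ∀ x, laguerreL a n x * laguerreL a m x * (x ^ a * Real.exp (-x))
        = laguerreL a m x * laguerreL a n x * (x ^ a * Real.exp (-x)) := by
      intro x; ring
    simp_rw [hsym]
    rw [lag_orth_le a ha m n h]
    by_cases hnm : n = m
    · subst hnm; simp
    · rw [if_neg (fun hh => hnm hh.symm), if_neg hnm]

lemma jac_orth (β : ℝ) (hβ : -1 < β) (k j : ℕ) :
    ∫ t in Ioo (-1:ℝ) 1, jacobiP β 0 k t * jacobiP β 0 j t * (1 - t) ^ β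
      = if k = j then 2 ^ (β + 1) / (β + 2 * k + 1) else 0 := by
  rcases le_total j k with h | h
  · exact jac_orth_le β hβ j k h
  · have hsym : ∀ t, jacobiP β 0 k t * jacobiP β 0 j t * (1 - t) ^ β
        = jacobiP β 0 j t * jacobiP β 0 k t * (1 - t) ^ β := by
      intro t; ring
    simp_rw [hsym]
    rw [jac_orth_le β hβ k j h]
    by_cases hkj : k = j
    · subst hkj; simp
    · rw [if_neg (fun hh => hkj hh.symm), if_neg hkj]

lemma cov_split (F : ℝ × ℝ → ℝ) (f g : ℝ → ℝ)
    (h : ∀ x t : ℝ, x ∈ Ioi (0:ℝ) → t ∈ Ioo (-1:ℝ) 1 → |x| • F (x, x * t) = f x * g t) :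
    ∫ p in {p : ℝ × ℝ | 0 < p.1 ∧ -p.1 < p.2 ∧ p.2 < p.1}, F p
      = (∫ x in Ioi (0:ℝ), f x) * ∫ t in Ioo (-1:ℝ) 1, g t := by
  rw [cov_integral]
  have h1 : ∫ q in (Ioi (0:ℝ)) ×ˢ (Ioo (-1:ℝ) 1), |q.1| • F (q.1, q.1 * q.2)
      = ∫ q in (Ioi (0:ℝ)) ×ˢ (Ioo (-1:ℝ) 1), f q.1 * g q.2 := by
    apply setIntegral_congr_fun (measurableSet_Ioi.prod measurableSet_Ioo)
    intro q hq
    rw [Set.mem_prod] at hq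
    exact h q.1 q.2 hq.1 hq.2
  rw [h1]
  have h2 : (volume : Measure (ℝ × ℝ)).restrict ((Ioi (0:ℝ)) ×ˢ (Ioo (-1:ℝ) 1))
      = (volume.restrict (Ioi (0:ℝ))).prod (volume.restrict (Ioo (-1:ℝ) 1)) := by
    rw [Measure.volume_eq_prod, Measure.prod_restrict]
  rw [h2]
  exact MeasureTheory.integral_prod_mul f g

/-- Orthogonality of the Laguerre–Jacobi Koornwinder polynomials. -/
theorem lj_orthogonality
    (α β : ℝ) (hα : α > -1) (hβ : β > -1) (n k m j : ℕ)
    (hk : 0 ≤ k) (hkn : k ≤ n) (hj : 0 ≤ j) (hjm : j ≤ m) :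
    ∫ p in {p : ℝ × ℝ | 0 < p.1 ∧ -p.1 < p.2 ∧ p.2 < p.1},
        ljP α β n k p.1 p.2 * ljP α β m j p.1 p.2 *
          (p.1 ^ (α - β) * Real.exp (-p.1) * (p.1 - p.2) ^ β)
      = if n = m ∧ k = j then sconst α β n k else 0 := by
  have hmain : ∀ x t : ℝ, x ∈ Ioi (0:ℝ) → t ∈ Ioo (-1:ℝ) 1 →
      |x| • (ljP α β n k (x, x * t).1 (x, x * t).2 * ljP α β m j (x, x * t).1 (x, x * t).2 *
        ((x, x * t).1 ^ (α - β) * Real.exp (-(x, x * t).1) * ((x, x * t).1 - (x, x * t).2) ^ β))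
      = (laguerreL (α + 2 * k + 1) (n - k) x * laguerreL (α + 2 * j + 1) (m - j) x *
          (x ^ (α + (k:ℝ) + j + 1) * Real.exp (-x))) *
        (jacobiP β 0 k t * jacobiP β 0 j t * (1 - t) ^ β) := by
    intro x t hx ht
    simp only [Set.mem_Ioi] at hx
    simp only [Set.mem_Ioo] at ht
    simp only [ljP, smul_eq_mul]
    have hdiv : x * t / x = t := by
      rw [mul_comm, mul_div_assoc, div_self (ne_of_gt hx), mul_one]
    rw [hdiv]
    have hsub : (x - x * t) ^ β = x ^ β * (1 - t) ^ β := by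
      rw [show x - x * t = x * (1 - t) from by ring, Real.mul_rpow hx.le (by linarith [ht.2])]
    rw [hsub, abs_of_pos hx]
    have hpow : x ^ (α + (k:ℝ) + j + 1) = x ^ (α - β) * x ^ β * x ^ (k:ℕ) * x ^ (j:ℕ) * x := by
      rw [show α + (k:ℝ) + j + 1 = (α - β) + β + (k:ℝ) + (j:ℝ) + 1 from by ring,
        Real.rpow_add hx, Real.rpow_add hx, Real.rpow_add hx, Real.rpow_add hx,
        Real.rpow_one, Real.rpow_natCast, Real.rpow_natCast]
    rw [hpow]
    ring
  rw [cov_split _ _ _ hmain]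
  rw [jac_orth β hβ k j]
  by_cases hkj : k = j
  · subst hkj
    rw [if_pos rfl]
    have hexp : α + (k:ℝ) + (k:ℝ) + 1 = α + 2 * (k:ℝ) + 1 := by ring
    simp only [hexp]
    have ha' : (-1:ℝ) < α + 2 * (k:ℝ) + 1 := by
      have : (0:ℝ) ≤ k := Nat.cast_nonneg k
      linarith
    rw [lag_orth (α + 2 * (k:ℝ) + 1) ha' (n - k) (m - k)]
    by_cases hnm : n = m
    · subst hnm
      rw [if_pos rfl]
      simp only [eq_self_iff_true, and_self, and_true, true_and, if_true]
      rw [sconst]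
      have harg : α + 2 * (k:ℝ) + 1 + ((n - k : ℕ):ℝ) + 1 = α + n + k + 2 := by
        rw [Nat.cast_sub hkn]; ring
      rw [harg]
      have h1 : (0:ℝ) < β + 2 * (k:ℝ) + 1 := by
        have : (0:ℝ) ≤ k := Nat.cast_nonneg k
        linarith
      have h2 : ((Nat.factorial (n - k) : ℝ)) ≠ 0 := by positivity
      field_simp
    · rw [if_neg (by omega), if_neg (by tauto)]
      ring
  · rw [if_neg hkj, if_neg (fun hh : n = m ∧ k = j => hkj hh.2)]
    ring
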